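/- For each n ≥ 1 and each transitive frame F = ⟨W,R⟩ with w ∈ W: F, w ⊨ Wid_n^+ (i.e., the formula Wid_n^+ is valid at w under all valuations) iff for every u with w R u but not u R w, the subframe of F generated by u has width at most n (every antichain in it has at most n elements). -/

import Mathlib

/-- A Kripke frame: a set of worlds with a binary relation. -/
structure Frame where
  World : Type
  rel : World → World → Prop

/-- `f` is a reduction (surjective p-morphism) of `F` to `G`. -/
def Reduction (F G : Frame) (f : F.World → G.World) : Prop :=
  Function.Surjective f ∧
  (∀ w u, F.rel w u → G.rel (f w) (f u)) ∧
  (∀ w v, G.rel (f w) v → ∃ u, F.rel w u ∧ f u = v)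

/-- `F` is reducible to `G`. -/
def Reducible (F G : Frame) : Prop := ∃ f, Reduction F G f

/-- The subframe of `F` generated by the point `w`. -/
def Frame.genSub (F : Frame) (w : F.World) : Frame :=
  ⟨{v // Relation.ReflTransGen F.rel w v}, fun a b => F.rel a.1 b.1⟩

/-- Modal formulas over countably many propositional variables. -/
inductive Formula where
  | var : ℕ → Formula
  | bot : Formula
  | imp : Formula → Formula → Formula
  | box : Formula → Formula
deriving DecidableEq

namespace Formula

def neg (a : Formula) : Formula := .imp a .bot
def top : Formula := .imp .bot .bot
def and (a b : Formula) : Formula := neg (.imp a (neg b))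
def or (a b : Formula) : Formula := .imp (neg a) b
def dia (a : Formula) : Formula := neg (.box (neg a))

/-- Finite conjunction of a list of formulas. -/
def bigConj (l : List Formula) : Formula := l.foldr and top

/-- Finite disjunction of a list of formulas. -/
def bigDisj (l : List Formula) : Formula := l.foldr or .bot

end Formula

/-- Kripke satisfaction of a formula at a world of `F` under valuation `V`. -/
def Sat (F : Frame) (V : ℕ → F.World → Prop) : F.World → Formula → Prop
  | w, .var n => V n w
  | _, .bot => False
  | w, .imp a b => Sat F V w a → Sat F V w b
  | w, .box a => ∀ u, F.rel w u → Sat F V u a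

/-- `φ` is valid at the point `w` of `F` (true under all valuations). -/
def SatAll (F : Frame) (w : F.World) (φ : Formula) : Prop := ∀ V, Sat F V w φ

/-- `φ` is valid in the frame `F`. -/
def Valid (F : Frame) (φ : Formula) : Prop := ∀ V w, Sat F V w φ

/-- The weak width formula `Wid_n^+`, with `q` encoded as variable `0` and
`p_i` as variable `i+1`:
`q ∧ ◇(□¬q ∧ ⋀_{i≤n} ◇p_i) → ⋁_{0 ≤ i ≠ j ≤ n} ◇(p_i ∧ (p_j ∨ ◇p_j))`. -/
def widPlus (n : ℕ) : Formula :=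
  .imp
    (.and (.var 0)
      (Formula.dia (.and (.box (Formula.neg (.var 0)))
        (Formula.bigConj ((List.finRange (n + 1)).map fun i => Formula.dia (.var (i + 1)))))))
    (Formula.bigDisj ((List.finRange (n + 1)).flatMap fun i =>
      (List.finRange (n + 1)).flatMap fun j =>
        if i = j then []
        else [Formula.dia (.and (.var (i + 1))
          (.or (.var (j + 1)) (Formula.dia (.var (j + 1)))))]))

/-- `A` is an antichain w.r.t. `R`: distinct elements are `R`-incomparable. -/
def AntichainIn {W : Type*} (R : W → W → Prop) (A : Set W) : Prop :=
  ∀ u ∈ A, ∀ v ∈ A, u ≠ v → ¬ R u v ∧ ¬ R v u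

section Helpers

variable {F : Frame} {V : ℕ → F.World → Prop} {w : F.World}

lemma sat_and {a b : Formula} :
    Sat F V w (.and a b) ↔ Sat F V w a ∧ Sat F V w b := by
  simp only [Formula.and, Formula.neg, Sat]
  tauto

lemma sat_or {a b : Formula} :
    Sat F V w (.or a b) ↔ Sat F V w a ∨ Sat F V w b := by
  simp only [Formula.or, Formula.neg, Sat]
  tauto

lemma sat_dia {a : Formula} :
    Sat F V w (.dia a) ↔ ∃ u, F.rel w u ∧ Sat F V u a := by
  simp only [Formula.dia, Formula.neg, Sat]
  constructor
  · intro h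
    by_contra hc
    push_neg at hc
    exact h (fun u hu ha => hc u hu ha) 
  · rintro ⟨u, hu, ha⟩ h
    exact h u hu ha

lemma sat_bigConj {l : List Formula} :
    Sat F V w (.bigConj l) ↔ ∀ φ ∈ l, Sat F V w φ := by
  induction l with
  | nil => simp [Formula.bigConj, Formula.top, Sat]
  | cons a l ih =>
    simp only [Formula.bigConj, List.foldr] at ih ⊢
    rw [sat_and, ih]
    simp

lemma sat_bigDisj {l : List Formula} :
    Sat F V w (.bigDisj l) ↔ ∃ φ ∈ l, Sat F V w φ := by
  induction l with
  | nil => simp [Formula.bigDisj, Sat]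
  | cons a l ih =>
    simp only [Formula.bigDisj, List.foldr] at ih ⊢
    rw [sat_or, ih]
    simp

lemma mem_disjList {n : ℕ} {φ : Formula} :
    φ ∈ ((List.finRange (n + 1)).flatMap fun i =>
      (List.finRange (n + 1)).flatMap fun j =>
        if i = j then []
        else [Formula.dia (.and (.var (i + 1))
          (.or (.var (j + 1)) (Formula.dia (.var (j + 1)))))]) ↔
    ∃ i j : Fin (n + 1), i ≠ j ∧ φ = Formula.dia (.and (.var (i + 1))
          (.or (.var (j + 1)) (Formula.dia (.var (j + 1))))) := by
  simp only [List.mem_flatMap, List.mem_finRange, List.bind_eq_flatMap, List.mem_pure, true_and]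
  constructor
  · rintro ⟨i, ⟨i', rfl⟩, j, ⟨j', rfl⟩, hj⟩
    split_ifs at hj with h
    · simp at hj
    · simp at hj
      exact ⟨i', j', fun hc => h (hc ▸ rfl), hj⟩
  · rintro ⟨i, j, hij, rfl⟩
    refine ⟨i, ⟨i, rfl⟩, j, ⟨j, rfl⟩, ?_⟩
    simp [Fin.val_ne_of_ne hij]

end Helpers

section Helpers2
variable {F : Frame} {V : ℕ → F.World → Prop} {w : F.World}

lemma sat_imp {a b : Formula} :
    Sat F V w (.imp a b) ↔ (Sat F V w a → Sat F V w b) := Iff.rfl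

lemma sat_var {k : ℕ} : Sat F V w (.var k) ↔ V k w := Iff.rfl

lemma sat_box {a : Formula} :
    Sat F V w (.box a) ↔ ∀ u, F.rel w u → Sat F V u a := Iff.rfl

lemma sat_neg {a : Formula} :
    Sat F V w (Formula.neg a) ↔ ¬ Sat F V w a := Iff.rfl

end Helpers2

lemma mem_conjList {n : ℕ} {φ : Formula} :
    φ ∈ ((List.finRange (n + 1)).map fun i => Formula.dia (Formula.var (i + 1))) ↔
    ∃ i : Fin (n + 1), φ = Formula.dia (.var ((i : ℕ) + 1)) := by
  simp only [List.mem_map, List.mem_finRange, List.bind_eq_flatMap,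
    List.mem_flatMap, List.mem_pure]
  aesop
/-- Frame condition for `Wid_n^+`: it is valid at `w` iff for every proper
successor `u` of `w`, every antichain contained in the subframe generated by
`u` has at most `n` elements. -/
theorem widPlus_frame_condition (n : ℕ) (hn : 1 ≤ n) (F : Frame)
    (htr : ∀ a b c, F.rel a b → F.rel b c → F.rel a c) (w : F.World) :
    SatAll F w (widPlus n) ↔
      ∀ u : F.World, F.rel w u → ¬ F.rel u w →
        ∀ A : Set F.World, A ⊆ {v | v = u ∨ F.rel u v} → AntichainIn F.rel A →
          Cardinal.mk A ≤ (n : Cardinal) := by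
  constructor
  · -- validity → frame condition
    intro h u hwu huw A hA hanti
    by_contra hcard
    push_neg at hcard
    have h1 : ((n + 1 : ℕ) : Cardinal) ≤ Cardinal.mk A := by
      rw [Cardinal.nat_succ]
      exact Order.succ_le_of_lt hcard
    rw [← Cardinal.mk_fin (n + 1), Cardinal.le_def] at h1
    obtain ⟨f⟩ := h1
    set v : Fin (n + 1) → F.World := fun i => (f i).1 with hv
    have hvinj : Function.Injective v := fun i j hij =>
      f.injective (Subtype.ext hij)
    have hvA : ∀ i, v i ∈ A := fun i => (f i).2
    -- all v i are strict successors of u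
    have hvu : ∀ i, F.rel u (v i) := by
      intro i
      rcases hA (hvA i) with h0 | h0
      · -- v i = u : contradiction using another element
        have hne : i ≠ (if i = 0 then 1 else 0) := by
          split_ifs with h' <;> simp_all <;> omega
        set j := (if i = (0 : Fin (n+1)) then (1 : Fin (n+1)) else 0)
        have hju : v j ≠ u := fun hc => hne (hvinj (by rw [h0, hc]))
        rcases hA (hvA j) with h2 | h2
        · exact absurd h2 hju
        · rw [← h0] at h2
          exact absurd h2 (hanti _ (hvA i) _ (hvA j) (Ne.symm (fun hc => hju (hc.trans h0)))).1
      · exact h0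
    -- valuation
    set V : ℕ → F.World → Prop := fun k x =>
      (k = 0 ∧ x = w) ∨ ∃ i : Fin (n + 1), k = (i : ℕ) + 1 ∧ x = v i with hV
    have hsat := h V
    unfold widPlus at hsat
    rw [sat_imp] at hsat
    have hant : Sat F V w (.and (.var 0)
      (Formula.dia (.and (.box (Formula.neg (.var 0)))
        (Formula.bigConj ((List.finRange (n + 1)).map fun i =>
          Formula.dia (.var (i + 1))))))) := by
      rw [sat_and]
      refine ⟨Or.inl ⟨rfl, rfl⟩, ?_⟩
      rw [sat_dia]
      refine ⟨u, hwu, ?_⟩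
      rw [sat_and]
      constructor
      · rw [sat_box]
        intro x hux
        rw [sat_neg, sat_var]
        intro hx
        simp only [hV] at hx
        rcases hx with ⟨-, rfl⟩ | ⟨i, hi, -⟩
        · exact huw hux
        · exact absurd hi (by omega)
      · rw [sat_bigConj]
        intro φ hφ
        rw [mem_conjList] at hφ
        obtain ⟨i, rfl⟩ := hφ
        rw [sat_dia]
        refine ⟨v i, hvu i, ?_⟩
        rw [sat_var]
        simp only [hV]
        exact Or.inr ⟨i, rfl, rfl⟩
    have hcons := hsat hant
    rw [sat_bigDisj] at hcons
    obtain ⟨φ, hφmem, hφ⟩ := hcons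
    rw [mem_disjList] at hφmem
    obtain ⟨i, j, hij, rfl⟩ := hφmem
    rw [sat_dia] at hφ
    obtain ⟨x, hwx, hx⟩ := hφ
    rw [sat_and, sat_var, sat_or, sat_var] at hx
    obtain ⟨hxi, hxj⟩ := hx
    simp only [hV] at hxi
    rcases hxi with ⟨h0, -⟩ | ⟨i', hi', rfl⟩
    · exact absurd h0 (by omega)
    have hii : i' = i := by
      apply Fin.val_injective; omega
    subst hii
    rcases hxj with hxj | hxj
    · simp only [hV] at hxj
      rcases hxj with ⟨h0, -⟩ | ⟨j', hj', hvj⟩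
      · exact absurd h0 (by omega)
      have hjj : j' = j := by apply Fin.val_injective; omega
      subst hjj
      exact hij (hvinj hvj)
    · rw [sat_dia] at hxj
      obtain ⟨y, hxy, hy⟩ := hxj
      rw [sat_var] at hy
      simp only [hV] at hy
      rcases hy with ⟨h0, -⟩ | ⟨j', hj', rfl⟩
      · exact absurd h0 (by omega)
      have hjj : j' = j := by apply Fin.val_injective; omega
      subst hjj
      exact (hanti _ (hvA i') _ (hvA j') (fun hc => hij (hvinj hc))).1 hxy
  · -- frame condition → validity
    intro hcond V
    unfold widPlus
    rw [sat_imp]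
    intro hant
    rw [sat_and] at hant
    obtain ⟨hq, hdia⟩ := hant
    rw [sat_var] at hq
    rw [sat_dia] at hdia
    obtain ⟨u, hwu, hu⟩ := hdia
    rw [sat_and] at hu
    obtain ⟨hbox, hconj⟩ := hu
    rw [sat_box] at hbox
    have huw : ¬ F.rel u w := fun hc => (sat_neg.mp (hbox w hc)) hq
    rw [sat_bigConj] at hconj
    have hvex : ∀ i : Fin (n + 1), ∃ x, F.rel u x ∧ V ((i : ℕ) + 1) x := by
      intro i
      have hm := hconj (Formula.dia (.var (i + 1)))
        (mem_conjList.mpr ⟨i, rfl⟩)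
      rw [sat_dia] at hm
      obtain ⟨x, hux, hx⟩ := hm
      exact ⟨x, hux, sat_var.mp hx⟩
    choose v hvu hvV using hvex
    -- a helper to produce the conclusion from a witness
    have concl : ∀ i j : Fin (n + 1), i ≠ j →
        ∀ x, F.rel w x → V ((i : ℕ) + 1) x →
          (V ((j : ℕ) + 1) x ∨ ∃ y, F.rel x y ∧ V ((j : ℕ) + 1) y) →
        Sat F V w (Formula.bigDisj ((List.finRange (n + 1)).flatMap fun a =>
          (List.finRange (n + 1)).flatMap fun b =>
            if a = b then []
            else [Formula.dia (.and (.var (a + 1))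
              (.or (.var (b + 1)) (Formula.dia (.var (b + 1)))))])) := by
      intro i j hij x hwx hxi hxj
      rw [sat_bigDisj]
      refine ⟨_, mem_disjList.mpr ⟨i, j, hij, rfl⟩, ?_⟩
      rw [sat_dia]
      refine ⟨x, hwx, ?_⟩
      rw [sat_and, sat_var, sat_or, sat_var]
      refine ⟨hxi, ?_⟩
      rcases hxj with h | ⟨y, hxy, hy⟩
      · exact Or.inl h
      · exact Or.inr (sat_dia.mpr ⟨y, hxy, sat_var.mpr hy⟩)
    by_cases hinj : ∃ i j : Fin (n + 1), i ≠ j ∧ v i = v j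
    · obtain ⟨i, j, hij, hvij⟩ := hinj
      exact concl i j hij (v i) (htr _ _ _ hwu (hvu i)) (hvV i)
        (Or.inl (hvij ▸ hvV j))
    · push_neg at hinj
      have hvinj : Function.Injective v := fun i j h => by
        by_contra hc; exact hinj i j hc h
      have hAsub : Set.range v ⊆ {x | x = u ∨ F.rel u x} :=
        by rintro x ⟨i, rfl⟩; exact Or.inr (hvu i)
      have hnot : ¬ AntichainIn F.rel (Set.range v) := by
        intro hanti
        have hle := hcond u hwu huw (Set.range v) hAsub hanti
        rw [Cardinal.mk_range_eq _ hvinj, Cardinal.mk_fin, Nat.cast_le] at hle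
        omega
      unfold AntichainIn at hnot
      push_neg at hnot
      obtain ⟨a, ⟨i, rfl⟩, b, ⟨j, rfl⟩, hne, hrel⟩ := hnot
      have hij : i ≠ j := fun hc => hne (hc ▸ rfl)
      rcases Classical.em (F.rel (v i) (v j)) with h | h'
      all_goals try have h := hrel h'
      · exact concl i j hij (v i) (htr _ _ _ hwu (hvu i)) (hvV i)
          (Or.inr ⟨v j, h, hvV j⟩)
      · exact concl j i hij.symm (v j) (htr _ _ _ hwu (hvu j)) (hvV j)
          (Or.inr ⟨v i, h, hvV i⟩)
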